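/- Let μ > 0, c > 0, and let G : ℝ → ℂ be measurable with |G(p)| ≤ c/(1+p²) for all p ∈ ℝ. Then the function (θ₁, θ₂) ↦ |sinh((θ₁ − θ₂)/2)|² · |G(μ(cosh θ₁ + cosh θ₂))|² is integrable on ℝ². -/

import Mathlib

open MeasureTheory

lemma integrable_exp_neg_abs' : Integrable (fun x : ℝ => Real.exp (-|x|)) := by
  rw [← integrableOn_univ, ← Set.Iic_union_Ioi (a := (0:ℝ))]
  apply IntegrableOn.union
  · apply (integrableOn_exp_Iic 0).congr_fun ?_ measurableSet_Iic
    intro x hx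
    have hx' : x ≤ 0 := hx
    simp [abs_of_nonpos hx']
  · apply (exp_neg_integrableOn_Ioi 0 one_pos).congr_fun ?_ measurableSet_Ioi
    intro x hx
    have hx' : (0:ℝ) < x := hx
    simp [abs_of_pos hx']

lemma abs_sinh_le_exp_abs (x : ℝ) : |Real.sinh x| ≤ Real.exp |x| := by
  rw [Real.abs_sinh, Real.sinh_eq]
  have h2 : 0 < Real.exp (-|x|) := Real.exp_pos _
  have h3 : 0 < Real.exp |x| := Real.exp_pos _
  linarith

lemma exp_abs_le_two_cosh (x : ℝ) : Real.exp |x| ≤ 2 * Real.cosh x := by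
  rw [Real.cosh_eq]
  have h1 : 0 < Real.exp x := Real.exp_pos _
  have h2 : 0 < Real.exp (-x) := Real.exp_pos _
  rcases abs_cases x with ⟨h, _⟩ | ⟨h, _⟩ <;> rw [h] <;> linarith

/-- Square integrability of the coefficient `f_{2,0}(θ₁,θ₂) =
sinh((θ₁−θ₂)/2)·G(μ(cosh θ₁ + cosh θ₂))` for `G` decaying like an inverse square. -/
theorem f20_square_integrable (μ c : ℝ) (hμ : 0 < μ) (hc : 0 < c)
    (G : ℝ → ℂ) (hG_meas : Measurable G)
    (hG : ∀ p : ℝ, ‖G p‖ ≤ c / (1 + p ^ 2)) :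
    Integrable (fun θ : ℝ × ℝ =>
      |Real.sinh ((θ.1 - θ.2) / 2)| ^ 2 *
        ‖G (μ * (Real.cosh θ.1 + Real.cosh θ.2))‖ ^ 2) := by
  have hg : Integrable (fun θ : ℝ × ℝ =>
      c ^ 2 / μ ^ 4 * (Real.exp (-|θ.1|) * Real.exp (-|θ.2|))) := by
    have : Integrable (fun θ : ℝ × ℝ => Real.exp (-|θ.1|) * Real.exp (-|θ.2|)) := by
      rw [MeasureTheory.Measure.volume_eq_prod]
      exact integrable_exp_neg_abs'.mul_prod integrable_exp_neg_abs'
    exact this.const_mul _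
  apply hg.mono'
  · apply Measurable.aestronglyMeasurable
    apply Measurable.mul
    · fun_prop
    · exact ((continuous_norm.measurable.comp (hG_meas.comp (by fun_prop))).pow_const 2)
  · filter_upwards with θ
    obtain ⟨a, b⟩ := θ
    simp only
    set p : ℝ := μ * (Real.cosh a + Real.cosh b) with hp
    set A := Real.exp |a| with hA
    set B := Real.exp |b| with hB
    have hA0 : 0 < A := Real.exp_pos _
    have hB0 : 0 < B := Real.exp_pos _
    have hq0 : 0 ≤ ‖G p‖ := norm_nonneg _
    -- sinh bound
    have hs2 : |Real.sinh ((a - b) / 2)| ^ 2 ≤ A * B := by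
      have h1 : |Real.sinh ((a - b) / 2)| ≤ Real.exp ((|a| + |b|) / 2) := by
        refine (abs_sinh_le_exp_abs _).trans (Real.exp_le_exp.mpr ?_)
        rw [abs_div, abs_two]
        have := abs_sub a b
        linarith
      calc |Real.sinh ((a - b) / 2)| ^ 2 ≤ Real.exp ((|a| + |b|) / 2) ^ 2 := by
            exact pow_le_pow_left₀ (abs_nonneg _) h1 2
        _ = A * B := by
            rw [← Real.exp_nat_mul, hA, hB, ← Real.exp_add]
            ring_nf
    -- cosh bound
    have hpge : μ ^ 2 * (A * B) ≤ 1 + p ^ 2 := by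
      have ha : A ≤ 2 * Real.cosh a := exp_abs_le_two_cosh a
      have hb : B ≤ 2 * Real.cosh b := exp_abs_le_two_cosh b
      have hca : 0 < Real.cosh a := Real.cosh_pos a
      have hcb : 0 < Real.cosh b := Real.cosh_pos b
      have : μ ^ 2 * (A * B) ≤ μ ^ 2 * (4 * (Real.cosh a * Real.cosh b)) := by
        apply mul_le_mul_of_nonneg_left ?_ (by positivity)
        nlinarith
      refine this.trans ?_
      rw [hp]
      nlinarith [sq_nonneg (Real.cosh a - Real.cosh b), sq_nonneg μ]
    have hq2 : ‖G p‖ ≤ c / (μ ^ 2 * (A * B)) := by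
      refine (hG p).trans ?_
      exact div_le_div_of_nonneg_left hc.le (by positivity) hpge
    have key : |Real.sinh ((a - b) / 2)| ^ 2 * ‖G p‖ ^ 2 ≤
        (A * B) * (c / (μ ^ 2 * (A * B))) ^ 2 := by
      exact mul_le_mul hs2 (pow_le_pow_left₀ hq0 hq2 2) (by positivity) (by positivity)
    have heq : (A * B) * (c / (μ ^ 2 * (A * B))) ^ 2 =
        c ^ 2 / μ ^ 4 * (Real.exp (-|a|) * Real.exp (-|b|)) := by
      rw [Real.exp_neg, Real.exp_neg, ← hA, ← hB]
      field_simp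
    rw [Real.norm_eq_abs, abs_of_nonneg (by positivity)]
    rw [heq] at key
    exact key
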